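/- For a downward closed family F of itemsets containing all singletons, if the empirical distribution q_D of the data is strictly positive, then the maximum entropy distribution among all distributions matching the empirical frequencies of all itemsets in F is the unique maximum likelihood distribution within the exponential model associated with F. -/

import Mathlib

open scoped Classical

/-- A family of itemsets is downward closed if it is closed under taking subsets. -/
def DownwardClosed {A : Type*} (F : Finset (Finset A)) : Prop :=
  ∀ X ∈ F, ∀ Y ⊆ X, Y ∈ F

variable {K : ℕ}

/-- The frequency of itemset `X` under distribution `p`: the probability that all
items of `X` take value `true`. -/
noncomputable def freq (p : (Fin K → Bool) → ℝ) (X : Finset (Fin K)) : ℝ :=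
  ∑ t ∈ Finset.univ.filter (fun t : Fin K → Bool => ∀ i ∈ X, t i = true), p t

/-- `p` is a probability distribution on `{0,1}^K`. -/
def IsDist (p : (Fin K → Bool) → ℝ) : Prop :=
  (∀ t, 0 ≤ p t) ∧ ∑ t, p t = 1

/-- The empirical distribution of a dataset `D`. -/
noncomputable def empirical (D : Multiset (Fin K → Bool)) : (Fin K → Bool) → ℝ :=
  fun t => (D.count t : ℝ) / (Multiset.card D : ℝ)

/-- The likelihood of a dataset `D` under distribution `p`. -/
noncomputable def likelihood (p : (Fin K → Bool) → ℝ) (D : Multiset (Fin K → Bool)) : ℝ :=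
  (D.map p).prod

/-- The (Shannon) entropy of a distribution. -/
noncomputable def entropyDist (p : (Fin K → Bool) → ℝ) : ℝ :=
  -∑ t, p t * Real.log (p t)

/-- Indicator `S_X(t)`: 1 if transaction `t` covers itemset `X`, else 0. -/
def ind (X : Finset (Fin K)) (t : Fin K → Bool) : ℝ :=
  if ∀ i ∈ X, t i = true then 1 else 0

/-- `p` has the exponential form associated with family `F`. -/
def ExpForm (F : Finset (Finset (Fin K))) (p : (Fin K → Bool) → ℝ) : Prop :=
  ∃ r : Finset (Fin K) → ℝ, ∀ t, p t = Real.exp (∑ X ∈ F, r X * ind X t)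

/-- The exponential model associated with `F`: distributions of exponential form
together with all their limits. -/
def ExpModel (F : Finset (Finset (Fin K))) : Set ((Fin K → Bool) → ℝ) :=
  closure {p | ExpForm F p}

/-- `p` matches the frequencies of `q` on every itemset of `F`. -/
def Matches (F : Finset (Finset (Fin K))) (p q : (Fin K → Bool) → ℝ) : Prop :=
  ∀ X ∈ F, freq p X = freq q X

/-- The marginal probability under `p` of observing the values of `t` on the
coordinates of `X`. -/
noncomputable def marg (p : (Fin K → Bool) → ℝ) (X : Finset (Fin K)) (t : Fin K → Bool) : ℝ :=
  ∑ s ∈ Finset.univ.filter (fun s : Fin K → Bool => ∀ i ∈ X, s i = t i), p s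

/-- The empirical entropy of an itemset `X` under distribution `q`. -/
noncomputable def entropyOf (q : (Fin K → Bool) → ℝ) (X : Finset (Fin K)) : ℝ :=
  -∑ u : {i // i ∈ X} → Bool,
      (marg q X fun i => if h : i ∈ X then u ⟨i, h⟩ else false) *
        Real.log (marg q X fun i => if h : i ∈ X then u ⟨i, h⟩ else false)

/-- Kullback–Leibler divergence. -/
noncomputable def KLdiv (p q : (Fin K → Bool) → ℝ) : ℝ :=
  ∑ t, p t * Real.log (p t / q t)

-- ---------- helpers ----------

lemma sum_filter_eq_sum_mul_ind (g : (Fin K → Bool) → ℝ) (X : Finset (Fin K)) :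
    ∑ t ∈ Finset.univ.filter (fun t : Fin K → Bool => ∀ i ∈ X, t i = true), g t
      = ∑ t, g t * ind X t := by
  rw [Finset.sum_filter]
  refine Finset.sum_congr rfl fun t _ => ?_
  by_cases h : ∀ i ∈ X, t i = true <;> simp [ind, h]

lemma freq_eq (p : (Fin K → Bool) → ℝ) (X : Finset (Fin K)) :
    freq p X = ∑ t, p t * ind X t := sum_filter_eq_sum_mul_ind p X

lemma entropy_eq (p : (Fin K → Bool) → ℝ) :
    entropyDist p = ∑ t, Real.negMulLog (p t) := by
  simp [entropyDist, Real.negMulLog, Finset.sum_neg_distrib]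

lemma expform_sum_mul_log {F : Finset (Finset (Fin K))} {p : (Fin K → Bool) → ℝ}
    {r : Finset (Fin K) → ℝ} (hp : ∀ t, p t = Real.exp (∑ X ∈ F, r X * ind X t))
    (a : (Fin K → Bool) → ℝ) :
    ∑ t, a t * Real.log (p t) = ∑ X ∈ F, r X * freq a X := by
  simp only [hp, Real.log_exp, Finset.mul_sum]
  rw [Finset.sum_comm]
  refine Finset.sum_congr rfl fun X _ => ?_
  rw [freq_eq, Finset.mul_sum]
  refine Finset.sum_congr rfl fun t _ => by ring

section Emp
variable {D : Multiset (Fin K → Bool)} (hpos : ∀ t, 0 < empirical D t)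
include hpos

lemma count_pos' (t : Fin K → Bool) : 0 < D.count t := by
  by_contra h
  have hc : D.count t = 0 := by omega
  have h2 := hpos t
  simp only [empirical, hc, Nat.cast_zero, zero_div] at h2
  exact lt_irrefl _ h2

lemma toFinset_univ' : D.toFinset = Finset.univ := by
  apply Finset.eq_univ_iff_forall.2
  intro t
  rw [Multiset.mem_toFinset, ← Multiset.count_pos]
  exact count_pos' hpos t

lemma card_pos' : 0 < Multiset.card D := by
  have := count_pos' hpos (fun _ => true)
  exact lt_of_lt_of_le this (Multiset.count_le_card _ _)

lemma empirical_isDist : IsDist (empirical D) := by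
  constructor
  · exact fun t => (hpos t).le
  · have hN : (0:ℝ) < (Multiset.card D : ℝ) := by exact_mod_cast card_pos' hpos
    simp only [empirical]
    rw [← Finset.sum_div, div_eq_one_iff_eq hN.ne']
    rw [← Nat.cast_sum]
    congr 1
    rw [← toFinset_univ' hpos]
    exact Multiset.toFinset_sum_count_eq D

lemma likelihood_eq (p : (Fin K → Bool) → ℝ) :
    likelihood p D = ∏ t, p t ^ (D.count t) := by
  rw [likelihood, Finset.prod_multiset_map_count, toFinset_univ' hpos]

lemma likelihood_pos {p : (Fin K → Bool) → ℝ} (hp : ∀ t, 0 < p t) :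
    0 < likelihood p D := by
  rw [likelihood_eq hpos]
  exact Finset.prod_pos fun t _ => pow_pos (hp t) _

lemma log_likelihood {p : (Fin K → Bool) → ℝ} (hp : ∀ t, 0 < p t) :
    Real.log (likelihood p D)
      = (Multiset.card D : ℝ) * ∑ t, empirical D t * Real.log (p t) := by
  rw [likelihood_eq hpos, Real.log_prod (fun t _ => pow_ne_zero _ (hp t).ne')]
  rw [Finset.mul_sum]
  refine Finset.sum_congr rfl fun t _ => ?_
  rw [Real.log_pow]
  simp only [empirical]
  have hN : ((Multiset.card D : ℝ)) ≠ 0 := by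
    have h3 : (0:ℝ) < (Multiset.card D : ℝ) := by exact_mod_cast card_pos' hpos
    exact h3.ne'
  field_simp

end Emp

lemma gibbs {p q : (Fin K → Bool) → ℝ} (hp : ∀ t, 0 < p t) (hq : ∀ t, 0 < q t)
    (hps : ∑ t, p t = 1) (hqs : ∑ t, q t = 1) (hne : q ≠ p) :
    ∑ t, p t * Real.log (q t) < ∑ t, p t * Real.log (p t) := by
  obtain ⟨t0, ht0⟩ : ∃ t, q t ≠ p t := by
    by_contra h
    push_neg at h
    exact hne (funext h)
  have key : ∑ t, (p t * Real.log (q t) - p t * Real.log (p t)) < ∑ t, (q t - p t) := by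
    refine Finset.sum_lt_sum (fun t _ => ?_) ⟨t0, Finset.mem_univ t0, ?_⟩
    · have h1 : Real.log (q t / p t) ≤ q t / p t - 1 := Real.log_le_sub_one_of_pos (div_pos (hq t) (hp t))
      rw [Real.log_div (hq t).ne' (hp t).ne'] at h1
      have := mul_le_mul_of_nonneg_left h1 (hp t).le
      rw [mul_sub, mul_sub, mul_div_cancel₀ _ (hp t).ne', mul_one] at this
      linarith
    · have h1 : Real.log (q t0 / p t0) < q t0 / p t0 - 1 := by
        refine Real.log_lt_sub_one_of_pos (div_pos (hq t0) (hp t0)) ?_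
        rw [ne_eq, div_eq_one_iff_eq (hp t0).ne']
        exact ht0
      rw [Real.log_div (hq t0).ne' (hp t0).ne'] at h1
      have := mul_lt_mul_of_pos_left h1 (hp t0)
      rw [mul_sub, mul_sub, mul_div_cancel₀ _ (hp t0).ne', mul_one] at this
      linarith
  rw [Finset.sum_sub_distrib, Finset.sum_sub_distrib, hps, hqs] at key
  linarith

lemma freq_lincomb (a b : ℝ) (p q : (Fin K → Bool) → ℝ) (X : Finset (Fin K)) :
    freq (fun t => a * p t + b * q t) X = a * freq p X + b * freq q X := by
  simp only [freq, Finset.sum_add_distrib, Finset.mul_sum]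

lemma maxent_pos {F : Finset (Finset (Fin K))} {pstar qe : (Fin K → Bool) → ℝ}
    (hqe : IsDist qe) (hqepos : ∀ t, 0 < qe t)
    (hdist : IsDist pstar) (hmatch : Matches F pstar qe)
    (hmaxent : ∀ p, IsDist p → Matches F p qe → entropyDist p ≤ entropyDist pstar) :
    ∀ t, 0 < pstar t := by
  by_contra h
  push_neg at h
  obtain ⟨t0, ht0⟩ := h
  have ht0 : pstar t0 = 0 := le_antisymm ht0 (hdist.1 t0)
  set b := qe t0 with hb
  have hbpos : 0 < b := hqepos t0
  set Hp := entropyDist pstar with hHp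
  set Hq := entropyDist qe with hHq
  set ε : ℝ := min (1/2) (Real.exp ((Hq - Hp - 1)/b)) with hε
  have hεpos : 0 < ε := lt_min (by norm_num) (Real.exp_pos _)
  have hεlt : ε < 1 := lt_of_le_of_lt (min_le_left _ _) (by norm_num)
  have hlogε : Real.log ε ≤ (Hq - Hp - 1)/b := by
    calc Real.log ε ≤ Real.log (Real.exp ((Hq - Hp - 1)/b)) :=
          Real.log_le_log hεpos (min_le_right _ _)
      _ = (Hq - Hp - 1)/b := Real.log_exp _
  set p' : (Fin K → Bool) → ℝ := fun t => (1-ε) * pstar t + ε * qe t with hp'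
  have hp'dist : IsDist p' := by
    constructor
    · intro t
      have := hdist.1 t; have := (hqepos t).le
      have h1 : (0:ℝ) ≤ 1 - ε := by linarith
      positivity
    · simp only [hp', Finset.sum_add_distrib, ← Finset.mul_sum, hdist.2, hqe.2]
      ring
  have hp'match : Matches F p' qe := by
    intro X hX
    rw [hp', freq_lincomb, hmatch X hX]
    ring
  have hconc : ∀ t : Fin K → Bool,
      (1-ε) * Real.negMulLog (pstar t) + ε * Real.negMulLog (qe t)
        ≤ Real.negMulLog (p' t) := by
    intro t
    have := Real.concaveOn_negMulLog.2 (Set.mem_Ici.2 (hdist.1 t))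
      (Set.mem_Ici.2 (hqepos t).le) (by linarith : (0:ℝ) ≤ 1 - ε) hεpos.le
      (by ring : (1-ε) + ε = 1)
    simpa [smul_eq_mul] using this
  -- extra gain at t0
  have hextra : Real.negMulLog (p' t0)
      = (1-ε) * Real.negMulLog (pstar t0) + ε * Real.negMulLog (qe t0)
        + b * Real.negMulLog ε := by
    have : p' t0 = ε * b := by simp [hp', ht0, hb]
    rw [this, Real.negMulLog_mul, ht0]
    simp [Real.negMulLog_zero]
    ring
  have hsum : (1-ε) * Hp + ε * Hq + b * Real.negMulLog ε ≤ entropyDist p' := by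
    rw [hHp, hHq, entropy_eq, entropy_eq, entropy_eq, Finset.mul_sum, Finset.mul_sum,
      ← Finset.sum_add_distrib]
    have : ∀ t ∈ Finset.univ, ((1-ε) * Real.negMulLog (pstar t) + ε * Real.negMulLog (qe t))
        + (if t = t0 then b * Real.negMulLog ε else 0) ≤ Real.negMulLog (p' t) := by
      intro t _
      by_cases h : t = t0
      · subst h
        rw [hextra]
        simp
      · simpa [h] using hconc t
    calc ∑ t, ((1-ε) * Real.negMulLog (pstar t) + ε * Real.negMulLog (qe t))
          + b * Real.negMulLog ε
        = ∑ t, (((1-ε) * Real.negMulLog (pstar t) + ε * Real.negMulLog (qe t))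
            + (if t = t0 then b * Real.negMulLog ε else 0)) := by
          rw [Finset.sum_add_distrib, Finset.sum_add_distrib,
            Finset.sum_ite_eq' Finset.univ t0 (fun _ => b * Real.negMulLog ε)]
          simp [Finset.sum_add_distrib]
      _ ≤ ∑ t, Real.negMulLog (p' t) := Finset.sum_le_sum this
  have hle : entropyDist p' ≤ Hp := hmaxent p' hp'dist hp'match
  have hnml : Real.negMulLog ε = -ε * Real.log ε := rfl
  have hfinal : Hq - Hp ≤ b * Real.log ε := by
    rw [hnml] at hsum
    have h2 : ε * (Hq - Hp - b * Real.log ε) ≤ 0 := by nlinarith [hsum, hle]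
    have h3 : Hq - Hp - b * Real.log ε ≤ 0 := by
      by_contra h4
      push_neg at h4
      nlinarith
    linarith
  have : b * Real.log ε ≤ Hq - Hp - 1 := by
    have := mul_le_mul_of_nonneg_left hlogε hbpos.le
    rwa [mul_div_cancel₀ _ hbpos.ne'] at this
  linarith

noncomputable def toE : ((Fin K → Bool) → ℝ) ≃ₗ[ℝ] EuclideanSpace ℝ (Fin K → Bool) :=
  (WithLp.linearEquiv 2 ℝ _).symm

noncomputable def Vspan (F : Finset (Finset (Fin K))) :
    Submodule ℝ (EuclideanSpace ℝ (Fin K → Bool)) :=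
  Submodule.span ℝ (Set.range (fun X : {X // X ∈ F} => toE (ind X.1)))

lemma toE_apply (g : (Fin K → Bool) → ℝ) (t : Fin K → Bool) : (toE g) t = g t := rfl

lemma log_mem_iff_expform (F : Finset (Finset (Fin K))) {q : (Fin K → Bool) → ℝ}
    (hq : ∀ t, 0 < q t) :
    (toE (fun t => Real.log (q t)) ∈ Vspan F) ↔ ExpForm F q := by
  constructor
  · intro h
    obtain ⟨c, hc⟩ := (Submodule.mem_span_range_iff_exists_fun ℝ).1 h
    refine ⟨fun X => if h : X ∈ F then c ⟨X, h⟩ else 0, fun t => ?_⟩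
    have h1 : ∑ X ∈ F, (if h : X ∈ F then c ⟨X, h⟩ else 0) * ind X t
        = ∑ X ∈ F.attach, c X * ind X.1 t := by
      rw [← Finset.sum_attach F (fun X => (if h : X ∈ F then c ⟨X, h⟩ else 0) * ind X t)]
      refine Finset.sum_congr rfl fun X _ => ?_
      rw [dif_pos X.2]
    have h2 : ∑ X ∈ F.attach, c X * ind X.1 t = Real.log (q t) := by
      have := congrArg (fun v => (toE.symm v) t) hc
      simp only [map_sum, map_smul] at this
      rw [Finset.sum_apply] at this
      simp only [Pi.smul_apply, smul_eq_mul] at this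
      rw [← Finset.univ_eq_attach]
      simpa using this
    rw [h1, h2, Real.exp_log (hq t)]
  · rintro ⟨r, hr⟩
    have : (fun t => Real.log (q t)) = ∑ X ∈ F.attach, r X.1 • ind X.1 := by
      funext t
      rw [Finset.sum_apply]
      simp only [Pi.smul_apply, smul_eq_mul]
      rw [hr t, Real.log_exp, ← Finset.sum_attach F (fun X => r X * ind X t)]
    rw [this, map_sum]
    refine Submodule.sum_mem _ fun X _ => ?_
    rw [map_smul]
    exact Submodule.smul_mem _ _ (Submodule.subset_span (Set.mem_range_self X))

lemma maxent_expform {F : Finset (Finset (Fin K))} (hempty : ∅ ∈ F)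
    {pstar qe : (Fin K → Bool) → ℝ}
    (hdist : IsDist pstar) (hpp : ∀ t, 0 < pstar t)
    (hmatch : Matches F pstar qe)
    (hmaxent : ∀ p, IsDist p → Matches F p qe → entropyDist p ≤ entropyDist pstar) :
    ExpForm F pstar := by
  set E := EuclideanSpace ℝ (Fin K → Bool)
  set ℓ : E := toE (fun t => Real.log (pstar t)) with hℓ
  set π : E := (Submodule.orthogonalProjection (Vspan F) ℓ : E) with hπdef
  have hπ : π ∈ Vspan F := (Submodule.orthogonalProjection (Vspan F) ℓ).2
  set w : E := ℓ - π with hw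
  have hworth : w ∈ (Vspan F)ᗮ := Submodule.sub_starProjection_mem_orthogonal (K := Vspan F) ℓ
  have hind : ∀ X ∈ F, ∑ t, w t * ind X t = 0 := by
    intro X hX
    have hmem : toE (ind X) ∈ Vspan F :=
      Submodule.subset_span (Set.mem_range_self (⟨X, hX⟩ : {X // X ∈ F}))
    have h0 := (Submodule.mem_orthogonal _ _).1 hworth _ hmem
    rw [PiLp.inner_apply] at h0
    simpa [RCLike.inner_apply, toE_apply, mul_comm] using h0
  have hsum0 : ∑ t, w t = 0 := by
    have := hind ∅ hempty
    simpa [ind] using this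
  set f : ℝ → ℝ := fun ε => ∑ t, Real.negMulLog (pstar t + ε * w t) with hf
  have hderiv : HasDerivAt f (∑ t, (-Real.log (pstar t) - 1) * w t) 0 := by
    apply HasDerivAt.fun_sum
    intro t _
    have hinner : HasDerivAt (fun ε : ℝ => pstar t + ε * w t) (w t) 0 := by
      simpa using ((hasDerivAt_id (0:ℝ)).mul_const (w t)).const_add (pstar t)
    have houter : HasDerivAt Real.negMulLog (-Real.log (pstar t) - 1)
        ((fun ε : ℝ => pstar t + ε * w t) 0) := by
      simpa using Real.hasDerivAt_negMulLog (hpp t).ne'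
    exact houter.comp 0 hinner
  have hmax : IsLocalMax f 0 := by
    have hev : ∀ᶠ ε : ℝ in nhds 0, ∀ t, 0 < pstar t + ε * w t := by
      rw [Filter.eventually_all]
      intro t
      have hc : Continuous (fun ε : ℝ => pstar t + ε * w t) := by continuity
      have h0 : (0:ℝ) < pstar t + 0 * w t := by simpa using hpp t
      exact (hc.tendsto 0).eventually (eventually_gt_nhds h0)
    filter_upwards [hev] with ε hε
    have hp'dist : IsDist (fun t => pstar t + ε * w t) := by
      constructor
      · exact fun t => (hε t).le
      · rw [Finset.sum_add_distrib, hdist.2, ← Finset.mul_sum, hsum0]; ring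
    have hp'match : Matches F (fun t => pstar t + ε * w t) qe := by
      intro X hX
      rw [freq_eq]
      have h1 : ∑ t, (pstar t + ε * w t) * ind X t
          = ∑ t, pstar t * ind X t + ε * ∑ t, w t * ind X t := by
        rw [Finset.mul_sum, ← Finset.sum_add_distrib]
        exact Finset.sum_congr rfl fun t _ => by ring
      rw [h1, hind X hX, mul_zero, add_zero, ← freq_eq]
      exact hmatch X hX
    have hle := hmaxent _ hp'dist hp'match
    have hf0 : f 0 = entropyDist pstar := by simp [hf, entropy_eq]
    have hfε : f ε = entropyDist (fun t => pstar t + ε * w t) := by rw [entropy_eq]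
    calc f ε = entropyDist (fun t => pstar t + ε * w t) := hfε
      _ ≤ entropyDist pstar := hle
      _ = f 0 := hf0.symm
  have hd0 : ∑ t, (-Real.log (pstar t) - 1) * w t = 0 := hmax.hasDerivAt_eq_zero hderiv
  have hwl : ∑ t, w t * Real.log (pstar t) = 0 := by
    have h1 : ∑ t, (-Real.log (pstar t) - 1) * w t
        = (∑ t, -(w t * Real.log (pstar t))) - ∑ t, w t := by
      rw [← Finset.sum_sub_distrib]
      exact Finset.sum_congr rfl fun t _ => by ring
    rw [h1, Finset.sum_neg_distrib, hsum0, sub_zero, neg_eq_zero] at hd0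
    exact hd0
  have hinner0 : (inner ℝ w ℓ : ℝ) = 0 := by
    rw [PiLp.inner_apply]
    have hwl' : ∑ t, w t * Real.log (pstar t) = ∑ t, ℓ t * w t :=
      Finset.sum_congr rfl fun t _ => mul_comm _ _
    simpa [RCLike.inner_apply, toE_apply, hwl'] using hwl
  have hw0 : w = 0 := by
    have h2 : (inner ℝ w π : ℝ) = 0 := by
      have := (Submodule.mem_orthogonal _ _).1 hworth _ hπ
      rwa [real_inner_comm] at this
    have h3 : (inner ℝ w w : ℝ) = 0 := by
      have hdecomp : (inner ℝ w ℓ : ℝ) = inner ℝ w w + inner ℝ w π := by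
        rw [← inner_add_right]
        congr 1
        rw [hw]
        abel
      rw [hinner0, h2, add_zero] at hdecomp
      exact hdecomp.symm
    exact inner_self_eq_zero.1 h3
  have hmem : ℓ ∈ Vspan F := by
    have : ℓ = π := by
      have := sub_eq_zero.1 (hw ▸ hw0)
      exact this
    rw [this]
    exact hπ
  exact (log_mem_iff_expform F hpp).1 hmem

lemma expmodel_pos_expform {F : Finset (Finset (Fin K))} {q : (Fin K → Bool) → ℝ}
    (hq : q ∈ ExpModel F) (hqpos : ∀ t, 0 < q t) : ExpForm F q := by
  rw [ExpModel] at hq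
  obtain ⟨pn, hpn, htend⟩ := mem_closure_iff_seq_limit.1 hq
  have hpos : ∀ n t, 0 < pn n t := by
    intro n t
    obtain ⟨r, hr⟩ := hpn n
    rw [hr t]; exact Real.exp_pos _
  have hmem : ∀ n, toE (fun t => Real.log (pn n t)) ∈ Vspan F :=
    fun n => (log_mem_iff_expform F (hpos n)).2 (hpn n)
  have hcont : Continuous (toE : ((Fin K → Bool) → ℝ) → EuclideanSpace ℝ (Fin K → Bool)) :=
    PiLp.continuous_toLp _ _
  have htendlog : Filter.Tendsto (fun n => toE (fun t => Real.log (pn n t)))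
      Filter.atTop (nhds (toE (fun t => Real.log (q t)))) := by
    refine (hcont.tendsto _).comp ?_
    rw [tendsto_pi_nhds]
    intro t
    have hqt : Filter.Tendsto (fun n => pn n t) Filter.atTop (nhds (q t)) :=
      ((continuous_apply t).tendsto q).comp htend
    exact ((Real.continuousAt_log (hqpos t).ne').tendsto).comp hqt
  have hcl : IsClosed ((Vspan F) : Set (EuclideanSpace ℝ (Fin K → Bool))) :=
    (Vspan F).closed_of_finiteDimensional
  have hmem2 := hcl.mem_of_tendsto htendlog (Filter.Eventually.of_forall hmem)
  exact (log_mem_iff_expform F hqpos).1 hmem2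


/-- Theorem: for a downward closed family `F` containing all singletons, if the empirical
distribution of the data is strictly positive, then the maximum entropy distribution
among all distributions matching the empirical frequencies of the itemsets of `F` is the
unique maximum likelihood distribution within the exponential model associated with
`F`. -/
theorem maxent_is_unique_mle (F : Finset (Finset (Fin K)))
    (hdc : DownwardClosed F) (hsing : ∀ i : Fin K, ({i} : Finset (Fin K)) ∈ F)
    (D : Multiset (Fin K → Bool)) (hD : D ≠ 0)
    (hpos : ∀ t, 0 < empirical D t)
    (pstar : (Fin K → Bool) → ℝ)
    (hdist : IsDist pstar) (hmatch : Matches F pstar (empirical D))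
    (hmaxent : ∀ p : (Fin K → Bool) → ℝ, IsDist p → Matches F p (empirical D) →
      entropyDist p ≤ entropyDist pstar) :
    pstar ∈ ExpModel F ∧
      ∀ q ∈ ExpModel F, IsDist q → q ≠ pstar →
        likelihood q D < likelihood pstar D := by
  rcases Nat.eq_zero_or_pos K with hK | hK
  · subst hK
    have huniq : ∀ p : (Fin 0 → Bool) → ℝ, IsDist p → p = fun _ => 1 := by
      intro p hp
      funext t
      have h1 := hp.2
      have h2 : ∑ s : Fin 0 → Bool, p s = p t := by
        rw [Finset.sum_eq_single_of_mem t (Finset.mem_univ t)]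
        intro b _ hb
        exact absurd (Subsingleton.elim b t) hb
      rw [h2] at h1
      exact h1
    constructor
    · apply subset_closure
      refine ⟨fun _ => 0, fun t => ?_⟩
      have := congrFun (huniq pstar hdist) t
      simp [this]
    · intro q _ hqD hqne
      exact absurd ((huniq q hqD).trans (huniq pstar hdist).symm) hqne
  · have hempty : ∅ ∈ F := hdc _ (hsing ⟨0, hK⟩) ∅ (Finset.empty_subset _)
    have hqed : IsDist (empirical D) := empirical_isDist hpos
    have hpp : ∀ t, 0 < pstar t := maxent_pos hqed hpos hdist hmatch hmaxent
    have hExp : ExpForm F pstar := maxent_expform hempty hdist hpp hmatch hmaxent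
    constructor
    · exact subset_closure hExp
    · intro q hqM hqD hqne
      have hLp : 0 < likelihood pstar D := likelihood_pos hpos hpp
      by_cases hq0 : ∀ t, 0 < q t
      · have hqExp := expmodel_pos_expform hqM hq0
        obtain ⟨rq, hrq⟩ := hqExp
        obtain ⟨rp, hrp⟩ := hExp
        have hLq : 0 < likelihood q D := likelihood_pos hpos hq0
        have hkey : ∀ (p : (Fin K → Bool) → ℝ) (r : Finset (Fin K) → ℝ),
            (∀ t, p t = Real.exp (∑ X ∈ F, r X * ind X t)) → (∀ t, 0 < p t) →
            Real.log (likelihood p D)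
              = (Multiset.card D : ℝ) * ∑ t, pstar t * Real.log (p t) := by
          intro p r hr hppos
          rw [log_likelihood hpos hppos]
          congr 1
          rw [expform_sum_mul_log hr (empirical D), expform_sum_mul_log hr pstar]
          exact Finset.sum_congr rfl fun X hX => by rw [hmatch X hX]
        have h1 := hkey q rq hrq hq0
        have h2 := hkey pstar rp hrp hpp
        have hgib : ∑ t, pstar t * Real.log (q t) < ∑ t, pstar t * Real.log (pstar t) :=
          gibbs hpp hq0 hdist.2 hqD.2 hqne
        have hN : (0:ℝ) < (Multiset.card D : ℝ) := by exact_mod_cast card_pos' hpos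
        have hlog : Real.log (likelihood q D) < Real.log (likelihood pstar D) := by
          rw [h1, h2]
          exact (mul_lt_mul_iff_right₀ hN).2 hgib
        have hfin := Real.exp_lt_exp.2 hlog
        rwa [Real.exp_log hLq, Real.exp_log hLp] at hfin
      · push_neg at hq0
        obtain ⟨t0, ht0⟩ := hq0
        have hq00 : q t0 = 0 := le_antisymm ht0 (hqD.1 t0)
        have hz : likelihood q D = 0 := by
          rw [likelihood_eq hpos]
          exact Finset.prod_eq_zero (Finset.mem_univ t0)
            (by rw [hq00]; exact zero_pow (count_pos' hpos t0).ne')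
        rw [hz]
        exact hLp
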